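/- Let m ≥ 1, let M ≥ 2 be an integer, let h₀ > 0 and 0 < h ≤ 1, and let g : {0,…,m−1} → ℝ satisfy |g(t)| ≤ h₀ hᵗ for all t. Set ε = π h₀ · (Σ_{t=0}^{m−1} hᵗ) · (m−1)/(2M). Let c ∈ ℝ and r > 0, and set a₁ = c − r/√2, a₂ = c + r/√2. Define f_r(θ) = Σ_{t=0}^{m−1} g(t) cos(tθ) and f_i(θ) = Σ_{t=0}^{m−1} g(t) sin(tθ). Suppose that for every integer m' ∈ {0,…,M}: a₁ + ε < f_r(m'π/M) < a₂ − ε and −r/√2 + ε < f_i(m'π/M) < r/√2 − ε. Then for every θ ∈ ℝ, the complex number C(e^{iθ}) = Σ_{t=0}^{m−1} g(t) e^{−iθt} satisfies |C(e^{iθ}) − c| < r. -/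

import Mathlib

lemma lip_sin (a b : ℝ) : |Real.sin a - Real.sin b| ≤ |a - b| := by
  rw [Real.sin_sub_sin, abs_mul, abs_mul, abs_two]
  have h1 : |Real.sin ((a - b) / 2)| ≤ |(a - b) / 2| := Real.abs_sin_le_abs
  have h2 : |Real.cos ((a + b) / 2)| ≤ 1 := Real.abs_cos_le_one _
  have h3 : |(a - b) / 2| = |a - b| / 2 := by rw [abs_div]; norm_num
  nlinarith [abs_nonneg (Real.sin ((a-b)/2)), abs_nonneg (Real.cos ((a+b)/2)), abs_nonneg (a-b)]

lemma lip_cos (a b : ℝ) : |Real.cos a - Real.cos b| ≤ |a - b| := by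
  rw [Real.cos_sub_cos]
  have h1 : |Real.sin ((a - b) / 2)| ≤ |(a - b) / 2| := Real.abs_sin_le_abs
  have h2 : |Real.sin ((a + b) / 2)| ≤ 1 := Real.abs_sin_le_one _
  have h3 : |(a - b) / 2| = |a - b| / 2 := by rw [abs_div]; norm_num
  rw [show (-2 : ℝ) * Real.sin ((a+b)/2) * Real.sin ((a-b)/2)
      = -(2 * Real.sin ((a+b)/2) * Real.sin ((a-b)/2)) by ring, abs_neg, abs_mul, abs_mul,
      abs_two]
  nlinarith [abs_nonneg (Real.sin ((a+b)/2)), abs_nonneg (Real.sin ((a-b)/2)), abs_nonneg (a-b)]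

/-- generic Lipschitz bound for the filter sums -/
lemma lip_sum (m : ℕ) (h₀ h : ℝ) (hh₀ : 0 < h₀) (hh : 0 < h)
    (g : ℕ → ℝ) (hg : ∀ t < m, |g t| ≤ h₀ * h ^ t)
    (F : ℝ → ℝ) (hF : ∀ a b : ℝ, |F a - F b| ≤ |a - b|) (x y : ℝ) :
    |(∑ t ∈ Finset.range m, g t * F (t * x)) - ∑ t ∈ Finset.range m, g t * F (t * y)|
      ≤ h₀ * (∑ t ∈ Finset.range m, h ^ t) * ((m : ℝ) - 1) * |x - y| := by
  rcases Nat.eq_zero_or_pos m with rfl | hm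
  · simp
  have hm1 : (1 : ℝ) ≤ (m : ℝ) := by exact_mod_cast hm
  rw [← Finset.sum_sub_distrib]
  calc |∑ t ∈ Finset.range m, (g t * F (t * x) - g t * F (t * y))|
      ≤ ∑ t ∈ Finset.range m, |g t * F (t * x) - g t * F (t * y)| :=
        Finset.abs_sum_le_sum_abs _ _
    _ ≤ ∑ t ∈ Finset.range m, h ^ t * (h₀ * (((m : ℝ) - 1) * |x - y|)) := by
        apply Finset.sum_le_sum
        intro t ht
        have htm : (t : ℝ) ≤ (m : ℝ) - 1 := by
          have : t + 1 ≤ m := Finset.mem_range.mp ht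
          have : (t : ℝ) + 1 ≤ (m : ℝ) := by exact_mod_cast this
          linarith
        have h1 : |F (t * x) - F (t * y)| ≤ t * |x - y| := by
          calc |F (t * x) - F (t * y)| ≤ |(t : ℝ) * x - t * y| := hF _ _
            _ = t * |x - y| := by rw [← mul_sub, abs_mul, Nat.abs_cast]
        have h2 : (t : ℝ) * |x - y| ≤ ((m : ℝ) - 1) * |x - y| :=
          mul_le_mul_of_nonneg_right htm (abs_nonneg _)
        calc |g t * F (t * x) - g t * F (t * y)| = |g t| * |F (t * x) - F (t * y)| := by
              rw [← mul_sub, abs_mul]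
          _ ≤ (h₀ * h ^ t) * (((m : ℝ) - 1) * |x - y|) := by
              apply mul_le_mul (hg t (Finset.mem_range.mp ht)) (h1.trans h2) (abs_nonneg _)
              positivity
          _ = h ^ t * (h₀ * (((m : ℝ) - 1) * |x - y|)) := by ring
    _ = h₀ * (∑ t ∈ Finset.range m, h ^ t) * ((m : ℝ) - 1) * |x - y| := by
        rw [← Finset.sum_mul]; ring

/-- Theorem 3, Case A (frequency-domain content): sampled box constraints on
`f_r` and `f_i`, tightened by `ε`, together with the decay constraint, force
the entire Nyquist locus of the FIR filter into the open disk of radius `r`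
centred at the real point `c`. -/
theorem stmt14 (m M : ℕ) (hm : 1 ≤ m) (hM : 2 ≤ M) (h₀ h : ℝ)
    (hh₀ : 0 < h₀) (hh : 0 < h) (hh1 : h ≤ 1)
    (g : ℕ → ℝ) (hg : ∀ t < m, |g t| ≤ h₀ * h ^ t)
    (c r : ℝ) (hr : 0 < r)
    (hbox : ∀ m' : ℕ, m' ≤ M →
      (c - r / Real.sqrt 2) +
          Real.pi * h₀ * (∑ t ∈ Finset.range m, h ^ t) * ((m : ℝ) - 1) / (2 * M) <
        (∑ t ∈ Finset.range m, g t * Real.cos (t * ((m' : ℝ) * Real.pi / M))) ∧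
      (∑ t ∈ Finset.range m, g t * Real.cos (t * ((m' : ℝ) * Real.pi / M))) <
        (c + r / Real.sqrt 2) -
          Real.pi * h₀ * (∑ t ∈ Finset.range m, h ^ t) * ((m : ℝ) - 1) / (2 * M) ∧
      -r / Real.sqrt 2 +
          Real.pi * h₀ * (∑ t ∈ Finset.range m, h ^ t) * ((m : ℝ) - 1) / (2 * M) <
        (∑ t ∈ Finset.range m, g t * Real.sin (t * ((m' : ℝ) * Real.pi / M))) ∧
      (∑ t ∈ Finset.range m, g t * Real.sin (t * ((m' : ℝ) * Real.pi / M))) <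
        r / Real.sqrt 2 -
          Real.pi * h₀ * (∑ t ∈ Finset.range m, h ^ t) * ((m : ℝ) - 1) / (2 * M)) :
    ∀ θ : ℝ,
      ‖(∑ t ∈ Finset.range m, (g t : ℂ) * Complex.exp (-(Complex.I * (θ * t)))) -
          (c : ℂ)‖ < r := by
  intro θ
  have hπ := Real.pi_pos
  have hMpos : (0 : ℝ) < M := by
    have : (2 : ℝ) ≤ M := by exact_mod_cast hM
    linarith
  have hm1 : (0 : ℝ) ≤ (m : ℝ) - 1 := by
    have : (1 : ℝ) ≤ (m : ℝ) := by exact_mod_cast hm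
    linarith
  have hS : (0 : ℝ) < ∑ t ∈ Finset.range m, h ^ t :=
    Finset.sum_pos (fun t _ => pow_pos hh t) ⟨0, Finset.mem_range.mpr hm⟩
  set S : ℝ := ∑ t ∈ Finset.range m, h ^ t with hSdef
  set ε : ℝ := Real.pi * h₀ * S * ((m : ℝ) - 1) / (2 * M) with hεdef
  set L : ℝ := h₀ * S * ((m : ℝ) - 1) with hLdef
  have hsq2 : (0 : ℝ) < Real.sqrt 2 := Real.sqrt_pos.mpr (by norm_num)
  -- Step 1: bounds hold for every φ ∈ [0, π]
  have hgrid : ∀ φ : ℝ, 0 ≤ φ → φ ≤ Real.pi →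
      (c - r / Real.sqrt 2 < ∑ t ∈ Finset.range m, g t * Real.cos (t * φ) ∧
       (∑ t ∈ Finset.range m, g t * Real.cos (t * φ)) < c + r / Real.sqrt 2 ∧
       -(r / Real.sqrt 2) < ∑ t ∈ Finset.range m, g t * Real.sin (t * φ) ∧
       (∑ t ∈ Finset.range m, g t * Real.sin (t * φ)) < r / Real.sqrt 2) := by
    intro φ hφ0 hφπ
    set x : ℝ := φ * M / Real.pi with hxdef
    have hx0 : 0 ≤ x := by positivity
    have hxM : x ≤ M := by
      rw [hxdef, div_le_iff₀ hπ]
      calc φ * M ≤ Real.pi * M := by nlinarith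
        _ = (M : ℝ) * Real.pi := by ring
    set m' : ℕ := ⌊x + 2⁻¹⌋₊ with hm'def
    have hm'M : m' ≤ M := by
      have h5 : x + 2⁻¹ < ((M + 1 : ℕ) : ℝ) := by push_cast; linarith [hxM]
      have := (Nat.floor_lt (by positivity : (0:ℝ) ≤ x + 2⁻¹)).mpr h5
      omega
    have hnear : |x - (m' : ℝ)| ≤ 1 / 2 := by
      have h1 : (m' : ℝ) ≤ x + 2⁻¹ := Nat.floor_le (by positivity)
      have h2 : x + 2⁻¹ < (m' : ℝ) + 1 := Nat.lt_floor_add_one _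
      rw [abs_le]; constructor <;> linarith
    have hφeq : φ = x * Real.pi / M := by
      rw [hxdef]; field_simp
    have hdist : |φ - (m' : ℝ) * Real.pi / M| ≤ Real.pi / (2 * M) := by
      have : φ - (m' : ℝ) * Real.pi / M = (x - m') * (Real.pi / M) := by
        rw [hφeq]; field_simp
      rw [this, abs_mul, abs_of_pos (by positivity : (0:ℝ) < Real.pi / M)]
      calc |x - (m' : ℝ)| * (Real.pi / M) ≤ (1 / 2) * (Real.pi / M) :=
            mul_le_mul_of_nonneg_right hnear (by positivity)
        _ = Real.pi / (2 * M) := by ring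
    have hLd : L * |φ - (m' : ℝ) * Real.pi / M| ≤ ε := by
      calc L * |φ - (m' : ℝ) * Real.pi / M| ≤ L * (Real.pi / (2 * M)) :=
            mul_le_mul_of_nonneg_left hdist (by rw [hLdef]; exact mul_nonneg (mul_nonneg hh₀.le hS.le) hm1)
        _ = ε := by rw [hεdef, hLdef]; field_simp
    obtain ⟨b1, b2, b3, b4⟩ := hbox m' hm'M
    have hc := (lip_sum m h₀ h hh₀ hh g hg Real.cos lip_cos φ ((m' : ℝ) * Real.pi / M)).trans hLd
    have hs := (lip_sum m h₀ h hh₀ hh g hg Real.sin lip_sin φ ((m' : ℝ) * Real.pi / M)).trans hLd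
    rw [abs_le] at hc hs
    have hnd : -r / Real.sqrt 2 = -(r / Real.sqrt 2) := neg_div _ _
    rw [hnd] at b3
    refine ⟨by linarith [hc.1, hc.2], by linarith [hc.1, hc.2],
      by linarith [hs.1, hs.2], by linarith [hs.1, hs.2]⟩
  -- Step 2: reduce arbitrary θ to φ ∈ [0, π]
  set k : ℤ := round (θ / (2 * Real.pi)) with hkdef
  set θ₁ : ℝ := θ - 2 * Real.pi * k with hθ₁def
  have hθ₁ : |θ₁| ≤ Real.pi := by
    have h1 : |θ / (2 * Real.pi) - k| ≤ 1 / 2 := abs_sub_round _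
    have h2 : θ₁ = (θ / (2 * Real.pi) - k) * (2 * Real.pi) := by
      rw [hθ₁def]; field_simp
    rw [h2, abs_mul, abs_of_pos (by positivity : (0:ℝ) < 2 * Real.pi)]
    calc |θ / (2 * Real.pi) - ↑k| * (2 * Real.pi) ≤ (1/2) * (2 * Real.pi) :=
          mul_le_mul_of_nonneg_right h1 (by positivity)
      _ = Real.pi := by ring
  have hcosθ : ∀ t : ℕ, Real.cos (t * θ) = Real.cos (t * |θ₁|) := by
    intro t
    have h1 : (t : ℝ) * θ = t * θ₁ + (t * k : ℤ) * (2 * Real.pi) := by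
      rw [hθ₁def]; push_cast; ring
    rw [h1, Real.cos_add_int_mul_two_pi]
    rcases abs_cases θ₁ with ⟨he, _⟩ | ⟨he, _⟩
    · rw [he]
    · rw [he, mul_neg, Real.cos_neg]
  have hFr := hgrid |θ₁| (abs_nonneg _) hθ₁
  -- value of the sin sum at θ is ± value at |θ₁|
  set a : ℝ := ∑ t ∈ Finset.range m, g t * Real.cos (t * θ) with hadef
  set b : ℝ := ∑ t ∈ Finset.range m, g t * Real.sin (t * θ) with hbdef
  have hsin_abs : |b| = |∑ t ∈ Finset.range m, g t * Real.sin (t * |θ₁|)| := by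
    rw [hbdef]
    have h1 : ∀ t : ℕ, Real.sin ((t : ℝ) * θ) = Real.sin (t * θ₁) := by
      intro t
      have : (t : ℝ) * θ = t * θ₁ + (t * k : ℤ) * (2 * Real.pi) := by
        rw [hθ₁def]; push_cast; ring
      rw [this, Real.sin_add_int_mul_two_pi]
    rcases abs_cases θ₁ with ⟨he, _⟩ | ⟨he, _⟩
    · congr 1
      exact Finset.sum_congr rfl fun t _ => by rw [h1 t, he]
    · have : (∑ t ∈ Finset.range m, g t * Real.sin (t * θ))
          = -(∑ t ∈ Finset.range m, g t * Real.sin (t * |θ₁|)) := by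
        rw [← Finset.sum_neg_distrib]
        exact Finset.sum_congr rfl fun t _ => by
          rw [h1 t, he, mul_neg, Real.sin_neg]; ring
      rw [this, abs_neg]
  have hcos_eq : a = ∑ t ∈ Finset.range m, g t * Real.cos (t * |θ₁|) := by
    rw [hadef]
    exact Finset.sum_congr rfl fun t _ => by rw [hcosθ t]
  have ha1 : c - r / Real.sqrt 2 < a := by rw [hcos_eq]; exact hFr.1
  have ha2 : a < c + r / Real.sqrt 2 := by rw [hcos_eq]; exact hFr.2.1
  have hb : |b| < r / Real.sqrt 2 := by
    rw [hsin_abs, abs_lt]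
    exact ⟨hFr.2.2.1, hFr.2.2.2⟩
  -- Step 3: compute the complex sum
  have hsum : (∑ t ∈ Finset.range m, (g t : ℂ) * Complex.exp (-(Complex.I * (θ * t))))
      = (a : ℂ) - (b : ℂ) * Complex.I := by
    have hterm : ∀ t ∈ Finset.range m,
        (g t : ℂ) * Complex.exp (-(Complex.I * (θ * t)))
          = ((g t * Real.cos (t * θ) : ℝ) : ℂ) - ((g t * Real.sin (t * θ) : ℝ) : ℂ) * Complex.I := by
      intro t _
      have h1 : -(Complex.I * ((θ : ℂ) * (t : ℂ))) = ((-((t : ℝ) * θ) : ℝ) : ℂ) * Complex.I := by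
        push_cast; ring
      rw [h1, Complex.exp_mul_I, ← Complex.ofReal_cos, ← Complex.ofReal_sin,
        Real.cos_neg, Real.sin_neg]
      push_cast
      ring
    rw [Finset.sum_congr rfl hterm, Finset.sum_sub_distrib, ← Finset.sum_mul]
    rw [hadef, hbdef]
    push_cast
    ring
  rw [hsum]
  -- Step 4: conclude
  have habs : ‖(a : ℂ) - (b : ℂ) * Complex.I - (c : ℂ)‖ ^ 2 = (a - c) ^ 2 + b ^ 2 := by
    rw [Complex.sq_norm, Complex.normSq_apply]
    simp
    ring
  have hac : |a - c| < r / Real.sqrt 2 := by rw [abs_lt]; constructor <;> linarith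
  have hhalf : (r / Real.sqrt 2) ^ 2 = r ^ 2 / 2 := by
    rw [div_pow, Real.sq_sqrt (by norm_num : (2:ℝ) ≥ 0)]
  have hlt : (a - c) ^ 2 + b ^ 2 < r ^ 2 := by
    have h1 : (a - c) ^ 2 < (r / Real.sqrt 2) ^ 2 := by
      have := abs_lt.mp hac
      exact sq_lt_sq' this.1 this.2
    have h2 : b ^ 2 < (r / Real.sqrt 2) ^ 2 := by
      have := abs_lt.mp hb
      exact sq_lt_sq' this.1 this.2
    rw [hhalf] at h1 h2
    linarith
  have := habs ▸ hlt
  exact lt_of_pow_lt_pow_left₀ 2 hr.le this
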